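/- Let M be the 2q(q-1)×n Boolean matrix for n = 2^q where rows are indexed by (p, p', v, v') with 0 ≤ p < p' < q and v, v' ∈ {0,1}, and M[(p,p',v,v'), X] = 1 iff the p-th binary digit of X is v and the p'-th binary digit is v'. Then M is 3̄-separable: for any two distinct subsets S, T ⊆ {0,...,n-1} each of size at most 3, the sets of positive rows induced by S and T differ. -/

import Mathlib

private lemma pair_key (q : ℕ) (hq : 2 ≤ q) (S T : Finset (Fin (2 ^ q)))
    (hS : S.card ≤ 3) (hT : T.card ≤ 3)
    (H : ∀ (p p' : Fin q), p < p' → ∀ v v' : Bool,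
        ((∃ X ∈ S, Nat.testBit X p = v ∧ Nat.testBit X p' = v') ↔
         (∃ X ∈ T, Nat.testBit X p = v ∧ Nat.testBit X p' = v'))) :
    ∀ X ∈ S, X ∈ T := by
  intro X hX
  by_contra hXT
  -- version of H for unordered distinct pairs
  have H' : ∀ (p p' : Fin q), p ≠ p' → ∀ v v' : Bool,
      ((∃ Z ∈ S, Nat.testBit Z p = v ∧ Nat.testBit Z p' = v') ↔
       (∃ Z ∈ T, Nat.testBit Z p = v ∧ Nat.testBit Z p' = v')) := by
    intro p p' hne v v'
    rcases lt_or_gt_of_ne hne with h | h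
    · exact H p p' h v v'
    · constructor
      · rintro ⟨Z, hZ, h1, h2⟩
        obtain ⟨W, hW, h1', h2'⟩ := (H p' p h v' v).mp ⟨Z, hZ, h2, h1⟩
        exact ⟨W, hW, h2', h1'⟩
      · rintro ⟨Z, hZ, h1, h2⟩
        obtain ⟨W, hW, h1', h2'⟩ := (H p' p h v' v).mpr ⟨Z, hZ, h2, h1⟩
        exact ⟨W, hW, h2', h1'⟩
  -- for every pair of distinct positions, some element of T agrees with X on both
  have agree : ∀ (p p' : Fin q), p ≠ p' → ∃ Y ∈ T,
      Nat.testBit Y p = Nat.testBit X p ∧ Nat.testBit Y p' = Nat.testBit X p' :=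
    fun p p' hne => (H' p p' hne _ _).mp ⟨X, hX, rfl, rfl⟩
  have hq1 : 1 < Fintype.card (Fin q) := by rw [Fintype.card_fin]; exact hq
  have exists_ne : ∀ r : Fin q, ∃ s : Fin q, s ≠ r :=
    fun r => Fintype.exists_ne_of_one_lt_card hq1 r
  -- every element of T differs from X at some position
  have diff : ∀ Y ∈ T, ∃ p : Fin q, Nat.testBit Y p ≠ Nat.testBit X p := by
    intro Y hY
    by_contra h
    push_neg at h
    have hYX : (Y : ℕ) = (X : ℕ) := by
      apply Nat.eq_of_testBit_eq
      intro i
      by_cases hi : i < q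
      · exact h ⟨i, hi⟩
      · have h1 : (Y : ℕ) < 2 ^ i :=
          lt_of_lt_of_le Y.isLt (Nat.pow_le_pow_right (by norm_num) (le_of_not_gt hi))
        have h2 : (X : ℕ) < 2 ^ i :=
          lt_of_lt_of_le X.isLt (Nat.pow_le_pow_right (by norm_num) (le_of_not_gt hi))
        rw [Nat.testBit_lt_two_pow h1, Nat.testBit_lt_two_pow h2]
    exact hXT (Fin.ext hYX ▸ hY)
  -- disagreement sets of distinct elements of T are disjoint
  have disj : ∀ Y ∈ T, ∀ Y' ∈ T, ∀ r : Fin q,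
      Nat.testBit Y r ≠ Nat.testBit X r → Nat.testBit Y' r ≠ Nat.testBit X r → Y = Y' := by
    intro Y hY Y' hY' r hr hr'
    by_contra hne
    set U := (T.erase Y).erase Y' with hU
    have hYU : Y' ∈ T.erase Y := Finset.mem_erase.mpr ⟨fun e => hne e.symm, hY'⟩
    have hUcard : U.card ≤ 1 := by
      rw [hU, Finset.card_erase_of_mem hYU, Finset.card_erase_of_mem hY]
      omega
    -- find s ≠ r such that every element of U flips at r or s
    have key : ∃ s : Fin q, s ≠ r ∧ ∀ Z ∈ U,
        Nat.testBit Z r ≠ Nat.testBit X r ∨ Nat.testBit Z s ≠ Nat.testBit X s := by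
      rcases U.eq_empty_or_nonempty with hUe | ⟨Y'', hY''⟩
      · obtain ⟨s, hs⟩ := exists_ne r
        exact ⟨s, hs, by simp [hUe]⟩
      · have hone : ∀ Z ∈ U, Z = Y'' := fun Z hZ => Finset.card_le_one.mp hUcard Z hZ Y'' hY''
        have hY''T : Y'' ∈ T := Finset.mem_of_mem_erase (Finset.mem_of_mem_erase hY'')
        obtain ⟨s0, hs0⟩ := diff Y'' hY''T
        by_cases hsr : s0 = r
        · obtain ⟨s, hs⟩ := exists_ne r
          exact ⟨s, hs, fun Z hZ => Or.inl (by rw [hone Z hZ]; exact hsr ▸ hs0)⟩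
        · exact ⟨s0, hsr, fun Z hZ => Or.inr (by rw [hone Z hZ]; exact hs0)⟩
    obtain ⟨s, hsr, hall⟩ := key
    obtain ⟨Y₀, hY₀, har, has⟩ := agree r s (Ne.symm hsr)
    by_cases e1 : Y₀ = Y
    · exact hr (e1 ▸ har)
    by_cases e2 : Y₀ = Y'
    · exact hr' (e2 ▸ har)
    have hY₀U : Y₀ ∈ U := Finset.mem_erase.mpr ⟨e2, Finset.mem_erase.mpr ⟨e1, hY₀⟩⟩
    rcases hall Y₀ hY₀U with h | h
    · exact h har
    · exact h has
  -- T has exactly three elements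
  have hT3 : T.card = 3 := by
    by_contra hc
    have hle : T.card ≤ 2 := by omega
    rcases T.eq_empty_or_nonempty with hTe | ⟨Y, hY⟩
    · have p0 : Fin q := ⟨0, by omega⟩
      obtain ⟨Y₀, hY₀, -⟩ := agree ⟨0, by omega⟩ ⟨1, by omega⟩ (by simp [Fin.ext_iff])
      simp [hTe] at hY₀
    · obtain ⟨r, hr⟩ := diff Y hY
      rcases (T.erase Y).eq_empty_or_nonempty with hTe | ⟨Y', hY'⟩
      · obtain ⟨s, hs⟩ := exists_ne r
        obtain ⟨Y₀, hY₀, har, -⟩ := agree r s (Ne.symm hs)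
        have : Y₀ = Y := by
          by_contra e
          have : Y₀ ∈ T.erase Y := Finset.mem_erase.mpr ⟨e, hY₀⟩
          simp [hTe] at this
        exact hr (this ▸ har)
      · have hY'T : Y' ∈ T := Finset.mem_of_mem_erase hY'
        have hne : Y' ≠ Y := (Finset.mem_erase.mp hY').1
        obtain ⟨r', hr'⟩ := diff Y' hY'T
        have hrr' : r ≠ r' := by
          intro e
          exact hne (disj Y' hY'T Y hY r' hr' (e ▸ hr))
        obtain ⟨Y₀, hY₀, har, har'⟩ := agree r r' hrr'
        have hcard2 : ∀ Z ∈ T, Z = Y ∨ Z = Y' := by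
          intro Z hZ
          by_contra hZe
          push_neg at hZe
          have h1 : Z ∈ (T.erase Y).erase Y' := Finset.mem_erase.mpr ⟨hZe.2, Finset.mem_erase.mpr ⟨hZe.1, hZ⟩⟩
          have c1 := Finset.card_erase_of_mem hY'
          have c2 := Finset.card_erase_of_mem hY
          have := Finset.card_pos.mpr ⟨Z, h1⟩
          omega
        rcases hcard2 Y₀ hY₀ with e | e
        · exact hr (e ▸ har)
        · exact hr' (e ▸ har')
  obtain ⟨Y1, Y2, Y3, h12, h13, h23, hTeq⟩ := Finset.card_eq_three.mp hT3
  have hY1 : Y1 ∈ T := by rw [hTeq]; simp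
  have hY2 : Y2 ∈ T := by rw [hTeq]; simp
  have hY3 : Y3 ∈ T := by rw [hTeq]; simp
  obtain ⟨p1, hp1⟩ := diff Y1 hY1
  obtain ⟨p2, hp2⟩ := diff Y2 hY2
  obtain ⟨p3, hp3⟩ := diff Y3 hY3
  -- flipping at pi identifies the element
  have ident1 : ∀ Y ∈ T, Nat.testBit Y p1 ≠ Nat.testBit X p1 → Y = Y1 :=
    fun Y hY h => disj Y hY Y1 hY1 p1 h hp1
  have ident2 : ∀ Y ∈ T, Nat.testBit Y p2 ≠ Nat.testBit X p2 → Y = Y2 :=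
    fun Y hY h => disj Y hY Y2 hY2 p2 h hp2
  have ident3 : ∀ Y ∈ T, Nat.testBit Y p3 ≠ Nat.testBit X p3 → Y = Y3 :=
    fun Y hY h => disj Y hY Y3 hY3 p3 h hp3
  have hp12 : p1 ≠ p2 := fun e => h12 (disj Y1 hY1 Y2 hY2 p1 hp1 (e ▸ hp2))
  have hp13 : p1 ≠ p3 := fun e => h13 (disj Y1 hY1 Y3 hY3 p1 hp1 (e ▸ hp3))
  have hp23 : p2 ≠ p3 := fun e => h23 (disj Y2 hY2 Y3 hY3 p2 hp2 (e ▸ hp3))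
  -- agreements
  have a12 : Nat.testBit Y1 p2 = Nat.testBit X p2 := by
    by_contra h; exact h12 (ident2 Y1 hY1 h)
  have a21 : Nat.testBit Y2 p1 = Nat.testBit X p1 := by
    by_contra h; exact h12.symm (ident1 Y2 hY2 h)
  have a32 : Nat.testBit Y3 p2 = Nat.testBit X p2 := by
    by_contra h; exact h23.symm (ident2 Y3 hY3 h)
  -- flips, rewritten with not
  have e11 : Nat.testBit Y1 p1 = !(Nat.testBit X p1) := by
    revert hp1; cases Nat.testBit (Y1:ℕ) p1 <;> cases Nat.testBit (X:ℕ) p1 <;> simp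
  have e22 : Nat.testBit Y2 p2 = !(Nat.testBit X p2) := by
    revert hp2; cases Nat.testBit (Y2:ℕ) p2 <;> cases Nat.testBit (X:ℕ) p2 <;> simp
  have e33 : Nat.testBit Y3 p3 = !(Nat.testBit X p3) := by
    revert hp3; cases Nat.testBit (Y3:ℕ) p3 <;> cases Nat.testBit (X:ℕ) p3 <;> simp
  -- no element of T flips at two of p1,p2,p3; hence such patterns absent from S
  have forb : ∀ (a b : Fin q), a ≠ b →
      (∀ Y ∈ T, ¬(Nat.testBit Y a = !(Nat.testBit X a) ∧
                   Nat.testBit Y b = !(Nat.testBit X b))) →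
      ∀ Z ∈ S, ¬(Nat.testBit Z a = !(Nat.testBit X a) ∧
                  Nat.testBit Z b = !(Nat.testBit X b)) := by
    rintro a b hab hTno Z hZ ⟨hz1, hz2⟩
    obtain ⟨Y, hY, f1, f2⟩ := (H' a b hab _ _).mp ⟨Z, hZ, hz1, hz2⟩
    exact hTno Y hY ⟨f1, f2⟩
  have no13 : ∀ Y ∈ T, ¬(Nat.testBit Y p1 = !(Nat.testBit X p1) ∧
      Nat.testBit Y p3 = !(Nat.testBit X p3)) := by
    rintro Y hY ⟨f1, f3⟩
    have e1 := ident1 Y hY (by rw [f1]; simp)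
    have e3 := ident3 Y hY (by rw [f3]; simp)
    exact h13 (e1 ▸ e3)
  have no12 : ∀ Y ∈ T, ¬(Nat.testBit Y p1 = !(Nat.testBit X p1) ∧
      Nat.testBit Y p2 = !(Nat.testBit X p2)) := by
    rintro Y hY ⟨f1, f2⟩
    have e1 := ident1 Y hY (by rw [f1]; simp)
    have e2 := ident2 Y hY (by rw [f2]; simp)
    exact h12 (e1 ▸ e2)
  have no23 : ∀ Y ∈ T, ¬(Nat.testBit Y p2 = !(Nat.testBit X p2) ∧
      Nat.testBit Y p3 = !(Nat.testBit X p3)) := by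
    rintro Y hY ⟨f2, f3⟩
    have e2 := ident2 Y hY (by rw [f2]; simp)
    have e3 := ident3 Y hY (by rw [f3]; simp)
    exact h23 (e2 ▸ e3)
  -- produce three extra elements of S
  obtain ⟨Z1, hZ1, z1a, z1b⟩ :=
    (H' p1 p2 hp12 (!(Nat.testBit X p1)) (Nat.testBit X p2)).mpr ⟨Y1, hY1, e11, a12⟩
  obtain ⟨Z2, hZ2, z2a, z2b⟩ :=
    (H' p1 p2 hp12 (Nat.testBit X p1) (!(Nat.testBit X p2))).mpr ⟨Y2, hY2, a21, e22⟩
  obtain ⟨Z3, hZ3, z3b, z3c⟩ :=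
    (H' p2 p3 hp23 (Nat.testBit X p2) (!(Nat.testBit X p3))).mpr ⟨Y3, hY3, a32, e33⟩
  have z1c : Nat.testBit Z1 p3 = Nat.testBit X p3 := by
    by_contra h
    have h' : Nat.testBit (Z1:ℕ) p3 = !(Nat.testBit (X:ℕ) p3) := by
      revert h; cases Nat.testBit (Z1:ℕ) (p3:ℕ) <;> cases Nat.testBit (X:ℕ) (p3:ℕ) <;> simp
    exact forb p1 p3 hp13 no13 Z1 hZ1 ⟨z1a, h'⟩
  have z2c : Nat.testBit Z2 p3 = Nat.testBit X p3 := by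
    by_contra h
    have h' : Nat.testBit (Z2:ℕ) p3 = !(Nat.testBit (X:ℕ) p3) := by
      revert h; cases Nat.testBit (Z2:ℕ) (p3:ℕ) <;> cases Nat.testBit (X:ℕ) (p3:ℕ) <;> simp
    exact forb p2 p3 hp23 no23 Z2 hZ2 ⟨z2b, h'⟩
  have z3a : Nat.testBit Z3 p1 = Nat.testBit X p1 := by
    by_contra h
    have h' : Nat.testBit (Z3:ℕ) p1 = !(Nat.testBit (X:ℕ) p1) := by
      revert h; cases Nat.testBit (Z3:ℕ) (p1:ℕ) <;> cases Nat.testBit (X:ℕ) (p1:ℕ) <;> simp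
    exact forb p1 p3 hp13 no13 Z3 hZ3 ⟨h', z3c⟩
  -- the four elements X, Z1, Z2, Z3 of S are pairwise distinct
  have bool_ne : ∀ b : Bool, b ≠ !b := by decide
  have dX1 : X ≠ Z1 := by
    intro e
    have e' : (X : ℕ) = (Z1 : ℕ) := congrArg Fin.val e
    rw [← e'] at z1a
    exact bool_ne _ z1a
  have dX2 : X ≠ Z2 := by
    intro e
    have e' : (X : ℕ) = (Z2 : ℕ) := congrArg Fin.val e
    rw [← e'] at z2b
    exact bool_ne _ z2b
  have dX3 : X ≠ Z3 := by
    intro e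
    have e' : (X : ℕ) = (Z3 : ℕ) := congrArg Fin.val e
    rw [← e'] at z3c
    exact bool_ne _ z3c
  have d12 : Z1 ≠ Z2 := by
    intro e
    have e' : (Z1 : ℕ) = (Z2 : ℕ) := congrArg Fin.val e
    rw [← e'] at z2a
    exact bool_ne _ (z1a.symm.trans z2a).symm
  have d13 : Z1 ≠ Z3 := by
    intro e
    have e' : (Z1 : ℕ) = (Z3 : ℕ) := congrArg Fin.val e
    rw [← e'] at z3a
    exact bool_ne _ (z1a.symm.trans z3a).symm
  have d23 : Z2 ≠ Z3 := by
    intro e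
    have e' : (Z2 : ℕ) = (Z3 : ℕ) := congrArg Fin.val e
    rw [e'] at z2c
    exact bool_ne _ (z2c.symm.trans z3c)
  have hsub : ({X, Z1, Z2, Z3} : Finset (Fin (2 ^ q))) ⊆ S := by
    intro a ha
    simp only [Finset.mem_insert, Finset.mem_singleton] at ha
    rcases ha with rfl | rfl | rfl | rfl <;> assumption
  have h4 : ({X, Z1, Z2, Z3} : Finset (Fin (2 ^ q))).card = 4 := by
    rw [Finset.card_insert_of_notMem (by simp [dX1, dX2, dX3]),
        Finset.card_insert_of_notMem (by simp [d12, d13]),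
        Finset.card_insert_of_notMem (by simp [d23]),
        Finset.card_singleton]
  have := Finset.card_le_card hsub
  omega

theorem pair_test_matrix_three_separable
    (q : ℕ) (hq : 2 ≤ q) (S T : Finset (Fin (2 ^ q)))
    (hS : S.card ≤ 3) (hT : T.card ≤ 3) (hST : S ≠ T) :
    ¬ ∀ (p p' : Fin q), p < p' → ∀ v v' : Bool,
        ((∃ X ∈ S, Nat.testBit X p = v ∧ Nat.testBit X p' = v') ↔
         (∃ X ∈ T, Nat.testBit X p = v ∧ Nat.testBit X p' = v')) := by
  intro H
  apply hST
  apply Finset.Subset.antisymm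
  · exact fun X hX => pair_key q hq S T hS hT H X hX
  · exact fun X hX => pair_key q hq T S hT hS (fun p p' h v v' => (H p p' h v v').symm) X hX
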